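/- The triple system H₁ contains exactly 13 Pasch configurations and the triple system H₂ contains exactly 8 Pasch configurations. Consequently H₁ and H₂ are not isomorphic: no bijection of ℤ₁₃ carries the set of triples of H₁ onto the set of triples of H₂. -/

import Mathlib

/-- The cyclic Steiner triple system on `ℤ₁₃`, with triples `{i, i+1, i+4}` and
`{i, i+2, i+7}` for `i ∈ ℤ₁₃` (arithmetic mod 13). -/
def H₁ : Finset (Finset (Fin 13)) :=
  (Finset.univ.image fun i : Fin 13 => ({i, i + 1, i + 4} : Finset (Fin 13))) ∪
  (Finset.univ.image fun i : Fin 13 => ({i, i + 2, i + 7} : Finset (Fin 13)))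

/-- The four triples removed from `H₁` in the Pasch trade. -/
def removedTriples : Finset (Finset (Fin 13)) :=
  {({3, 4, 7} : Finset (Fin 13)), {3, 5, 10}, {4, 10, 12}, {5, 7, 12}}

/-- The four replacement triples of the Pasch trade. -/
def addedTriples : Finset (Finset (Fin 13)) :=
  {({3, 4, 10} : Finset (Fin 13)), {3, 5, 7}, {4, 7, 12}, {5, 10, 12}}

/-- The triple system obtained from `H₁` by the Pasch trade. -/
def H₂ : Finset (Finset (Fin 13)) := (H₁ \ removedTriples) ∪ addedTriples

/-- A Pasch configuration: four triples on six distinct points of the form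
`{a,b,c}, {a,d,e}, {b,d,f}, {c,e,f}`. -/
def IsPasch (Q : Finset (Finset (Fin 13))) : Prop :=
  ∃ a b c d e f : Fin 13,
    ([a, b, c, d, e, f] : List (Fin 13)).Nodup ∧
    Q = {({a, b, c} : Finset (Fin 13)), {a, d, e}, {b, d, f}, {c, e, f}}

/-- The number of Pasch configurations contained in a triple system. -/
noncomputable def paschCount (T : Finset (Finset (Fin 13))) : ℕ :=
  Nat.card {Q : Finset (Finset (Fin 13)) // Q ⊆ T ∧ IsPasch Q}

set_option maxRecDepth 100000
set_option maxHeartbeats 4000000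

def H₁' : Finset (Finset (Fin 13)) := {({0,1,4} : Finset (Fin 13)), {0,2,7}, {0,3,12}, {0,5,11}, {0,6,8}, {0,9,10}, {1,2,5}, {1,3,8}, {1,6,12}, {1,7,9}, {1,10,11}, {2,3,6}, {2,4,9}, {2,8,10}, {2,11,12}, {3,4,7}, {3,5,10}, {3,9,11}, {4,5,8}, {4,6,11}, {4,10,12}, {5,6,9}, {5,7,12}, {6,7,10}, {7,8,11}, {8,9,12}}

def H₂' : Finset (Finset (Fin 13)) := {({0,1,4} : Finset (Fin 13)), {0,2,7}, {0,3,12}, {0,5,11}, {0,6,8}, {0,9,10}, {1,2,5}, {1,3,8}, {1,6,12}, {1,7,9}, {1,10,11}, {2,3,6}, {2,4,9}, {2,8,10}, {2,11,12}, {3,4,10}, {3,5,7}, {3,9,11}, {4,5,8}, {4,6,11}, {4,7,12}, {5,6,9}, {5,10,12}, {6,7,10}, {7,8,11}, {8,9,12}}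

def S₁ : Finset (Finset (Finset (Fin 13))) :=
  {{({0,1,4} : Finset (Fin 13)), {0,2,7}, {1,7,9}, {2,4,9}},
   {({0,2,7} : Finset (Fin 13)), {0,6,8}, {2,8,10}, {6,7,10}},
   {({0,2,7} : Finset (Fin 13)), {0,5,11}, {2,11,12}, {5,7,12}},
   {({0,3,12} : Finset (Fin 13)), {0,6,8}, {1,3,8}, {1,6,12}},
   {({0,5,11} : Finset (Fin 13)), {0,6,8}, {4,5,8}, {4,6,11}},
   {({0,5,11} : Finset (Fin 13)), {0,9,10}, {3,5,10}, {3,9,11}},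
   {({1,2,5} : Finset (Fin 13)), {1,3,8}, {2,8,10}, {3,5,10}},
   {({1,3,8} : Finset (Fin 13)), {1,7,9}, {3,9,11}, {7,8,11}},
   {({1,6,12} : Finset (Fin 13)), {1,7,9}, {5,6,9}, {5,7,12}},
   {({1,6,12} : Finset (Fin 13)), {1,10,11}, {4,6,11}, {4,10,12}},
   {({2,3,6} : Finset (Fin 13)), {2,4,9}, {3,9,11}, {4,6,11}},
   {({2,4,9} : Finset (Fin 13)), {2,8,10}, {4,10,12}, {8,9,12}},
   {({3,4,7} : Finset (Fin 13)), {3,5,10}, {4,10,12}, {5,7,12}}}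

def S₂ : Finset (Finset (Finset (Fin 13))) :=
  {{({0,1,4} : Finset (Fin 13)), {0,2,7}, {1,7,9}, {2,4,9}},
   {({0,2,7} : Finset (Fin 13)), {0,6,8}, {2,8,10}, {6,7,10}},
   {({0,3,12} : Finset (Fin 13)), {0,6,8}, {1,3,8}, {1,6,12}},
   {({0,5,11} : Finset (Fin 13)), {0,6,8}, {4,5,8}, {4,6,11}},
   {({1,2,5} : Finset (Fin 13)), {1,10,11}, {2,11,12}, {5,10,12}},
   {({1,3,8} : Finset (Fin 13)), {1,7,9}, {3,9,11}, {7,8,11}},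
   {({2,3,6} : Finset (Fin 13)), {2,4,9}, {3,9,11}, {4,6,11}},
   {({3,4,10} : Finset (Fin 13)), {3,5,7}, {4,7,12}, {5,10,12}}}

open Fin.NatCast in
/-- Offset table: the third point of the `H₁`-triple through `x` and `x + d` is
`x + g d` (for `d ≠ 0`). -/
def g (d : Fin 13) : Fin 13 :=
  (([0, 4, 7, 12, 1, 11, 8, 2, 6, 10, 9, 5, 3].getD d.val 0 : ℕ) : Fin 13)

/-- The third point of the `H₁`-triple through two distinct points. -/
def f3 (x y : Fin 13) : Fin 13 := x + g (y - x)

/-- Exceptional pairs for `H₂` (the pairs inside the traded quadrilateral). -/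
def exL : List (ℕ × ℕ × ℕ) :=
  [(3,4,10), (3,5,7), (3,7,5), (3,10,4), (4,7,12), (4,10,3), (4,12,7), (5,7,3),
   (5,10,12), (5,12,10), (7,12,4), (10,12,5)]

open Fin.NatCast in
/-- The third point of the `H₂`-triple through two distinct points. -/
def f32 (x y : Fin 13) : Fin 13 :=
  match exL.find? (fun p => p.1 == min x.val y.val && p.2.1 == max x.val y.val) with
  | some p => ((p.2.2 : ℕ) : Fin 13)
  | none => f3 x y

lemma hH1 : H₁ = H₁' := by decide

lemma hH2 : H₂ = H₂' := by rw [H₂, hH1]; decide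

lemma third1 : ∀ {x y z : Fin 13}, x ≠ y → x ≠ z → y ≠ z →
    ({x, y, z} : Finset (Fin 13)) ∈ H₁ → z = f3 x y := by
  intro x y z hxy hxz hyz hm
  rw [H₁, Finset.mem_union] at hm
  have hx : x ∈ ({x, y, z} : Finset (Fin 13)) := by simp
  have hy : y ∈ ({x, y, z} : Finset (Fin 13)) := by simp
  have hz : z ∈ ({x, y, z} : Finset (Fin 13)) := by simp
  rcases hm with hm | hm <;>
    obtain ⟨i, -, hi⟩ := Finset.mem_image.mp hm <;>
    rw [← hi] at hx hy hz <;>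
    simp only [Finset.mem_insert, Finset.mem_singleton] at hx hy hz <;>
    clear hi hm <;>
    rcases hx with rfl | rfl | rfl <;> rcases hy with rfl | rfl | rfl <;>
      rcases hz with rfl | rfl | rfl <;>
    first
      | exact absurd rfl hxy
      | exact absurd rfl hxz
      | exact absurd rfl hyz
      | (clear hxy hxz hyz; first | (revert i; decide) | (revert x; decide) | (revert y; decide) | (revert z; decide))

lemma excL : ∀ x y : Fin 13, f32 x y ≠ f3 x y →
    ({x, y, f3 x y} : Finset (Fin 13)) ∈ removedTriples := by decide

lemma third2 : ∀ {x y z : Fin 13}, x ≠ y → x ≠ z → y ≠ z →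
    ({x, y, z} : Finset (Fin 13)) ∈ H₂ → z = f32 x y := by
  intro x y z hxy hxz hyz hm
  rw [H₂, Finset.mem_union] at hm
  rcases hm with hm | hm
  · obtain ⟨h1, h2⟩ := Finset.mem_sdiff.mp hm
    have hz := third1 hxy hxz hyz h1
    by_cases hfe : f32 x y = f3 x y
    · rw [hfe]; exact hz
    · exact absurd (hz ▸ excL x y hfe) h2
  · have hx : x ∈ ({x, y, z} : Finset (Fin 13)) := by simp
    have hy : y ∈ ({x, y, z} : Finset (Fin 13)) := by simp
    have hz : z ∈ ({x, y, z} : Finset (Fin 13)) := by simp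
    simp only [addedTriples, Finset.mem_insert, Finset.mem_singleton] at hm
    rcases hm with hm | hm | hm | hm <;>
      rw [hm] at hx hy hz <;>
      simp only [Finset.mem_insert, Finset.mem_singleton] at hx hy hz <;>
      clear hm <;>
      rcases hx with rfl | rfl | rfl <;> rcases hy with rfl | rfl | rfl <;>
        rcases hz with rfl | rfl | rfl <;>
      first
        | exact absurd rfl hxy
        | exact absurd rfl hxz
        | exact absurd rfl hyz
        | decide

lemma forwardF1 : ∀ a b d : Fin 13,
    ([a, b, f3 a b, d, f3 a d, f3 b d] : List (Fin 13)).Nodup →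
    f3 (f3 a b) (f3 a d) = f3 b d →
    ({({a, b, f3 a b} : Finset (Fin 13)), {a, d, f3 a d}, {b, d, f3 b d},
      {f3 a b, f3 a d, f3 b d}} : Finset (Finset (Fin 13))) ∈ S₁ := by decide

lemma forwardF2 : ∀ a b d : Fin 13,
    ([a, b, f32 a b, d, f32 a d, f32 b d] : List (Fin 13)).Nodup →
    f32 (f32 a b) (f32 a d) = f32 b d →
    ({({a, b, f32 a b} : Finset (Fin 13)), {a, d, f32 a d}, {b, d, f32 b d},
      {f32 a b, f32 a d, f32 b d}} : Finset (Finset (Fin 13))) ∈ S₂ := by decide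

lemma iff1 : ∀ Q, (Q ⊆ H₁ ∧ IsPasch Q) ↔ Q ∈ S₁ := by
  intro Q
  constructor
  · rintro ⟨hsub, a, b, c, d, e, f, hnd, rfl⟩
    simp only [List.nodup_cons, List.mem_cons, List.not_mem_nil, or_false,
      List.mem_singleton, not_or, List.nodup_nil, and_true] at hnd
    obtain ⟨⟨hab, hac, had, hae, haf⟩, ⟨hbc, hbd, hbe, hbf⟩, ⟨hcd, hce, hcf⟩,
      ⟨hde, hdf⟩, hef, -⟩ := hnd
    have h1 : ({a, b, c} : Finset (Fin 13)) ∈ H₁ := hsub (by simp)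
    have h2 : ({a, d, e} : Finset (Fin 13)) ∈ H₁ := hsub (by simp)
    have h3 : ({b, d, f} : Finset (Fin 13)) ∈ H₁ := hsub (by simp)
    have h4 : ({c, e, f} : Finset (Fin 13)) ∈ H₁ := hsub (by simp)
    obtain rfl := third1 hab hac hbc h1
    obtain rfl := third1 had hae hde h2
    have hf : f = f3 b d := third1 hbd hbf hdf h3
    have hff := third1 hce hcf hef h4
    subst hf
    exact forwardF1 a b d
      (by simp only [List.nodup_cons, List.mem_cons, List.not_mem_nil, or_false,
            List.mem_singleton, not_or, List.nodup_nil, and_true]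
          exact ⟨⟨hab, hac, had, hae, haf⟩, ⟨hbc, hbd, hbe, hbf⟩, ⟨hcd, hce, hcf⟩,
            ⟨hde, hdf⟩, hef, not_false⟩)
      hff.symm
  · intro hQ
    rw [hH1]
    fin_cases hQ <;>
      refine ⟨by decide, ?_⟩ <;>
      first |
        exact ⟨0, 1, 4, 7, 2, 9, by decide, by decide⟩ |
        exact ⟨0, 2, 7, 8, 6, 10, by decide, by decide⟩ |
        exact ⟨0, 2, 7, 11, 5, 12, by decide, by decide⟩ |
        exact ⟨0, 3, 12, 8, 6, 1, by decide, by decide⟩ |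
        exact ⟨0, 5, 11, 8, 6, 4, by decide, by decide⟩ |
        exact ⟨0, 5, 11, 10, 9, 3, by decide, by decide⟩ |
        exact ⟨1, 2, 5, 8, 3, 10, by decide, by decide⟩ |
        exact ⟨1, 3, 8, 9, 7, 11, by decide, by decide⟩ |
        exact ⟨1, 6, 12, 9, 7, 5, by decide, by decide⟩ |
        exact ⟨1, 6, 12, 11, 10, 4, by decide, by decide⟩ |
        exact ⟨2, 3, 6, 9, 4, 11, by decide, by decide⟩ |
        exact ⟨2, 4, 9, 10, 8, 12, by decide, by decide⟩ |
        exact ⟨3, 4, 7, 10, 5, 12, by decide, by decide⟩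

lemma iff2 : ∀ Q, (Q ⊆ H₂ ∧ IsPasch Q) ↔ Q ∈ S₂ := by
  intro Q
  constructor
  · rintro ⟨hsub, a, b, c, d, e, f, hnd, rfl⟩
    simp only [List.nodup_cons, List.mem_cons, List.not_mem_nil, or_false,
      List.mem_singleton, not_or, List.nodup_nil, and_true] at hnd
    obtain ⟨⟨hab, hac, had, hae, haf⟩, ⟨hbc, hbd, hbe, hbf⟩, ⟨hcd, hce, hcf⟩,
      ⟨hde, hdf⟩, hef, -⟩ := hnd
    have h1 : ({a, b, c} : Finset (Fin 13)) ∈ H₂ := hsub (by simp)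
    have h2 : ({a, d, e} : Finset (Fin 13)) ∈ H₂ := hsub (by simp)
    have h3 : ({b, d, f} : Finset (Fin 13)) ∈ H₂ := hsub (by simp)
    have h4 : ({c, e, f} : Finset (Fin 13)) ∈ H₂ := hsub (by simp)
    obtain rfl := third2 hab hac hbc h1
    obtain rfl := third2 had hae hde h2
    have hf : f = f32 b d := third2 hbd hbf hdf h3
    have hff := third2 hce hcf hef h4
    subst hf
    exact forwardF2 a b d
      (by simp only [List.nodup_cons, List.mem_cons, List.not_mem_nil, or_false,
            List.mem_singleton, not_or, List.nodup_nil, and_true]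
          exact ⟨⟨hab, hac, had, hae, haf⟩, ⟨hbc, hbd, hbe, hbf⟩, ⟨hcd, hce, hcf⟩,
            ⟨hde, hdf⟩, hef, not_false⟩)
      hff.symm
  · intro hQ
    rw [hH2]
    fin_cases hQ <;>
      refine ⟨by decide, ?_⟩ <;>
      first |
        exact ⟨0, 1, 4, 7, 2, 9, by decide, by decide⟩ |
        exact ⟨0, 2, 7, 8, 6, 10, by decide, by decide⟩ |
        exact ⟨0, 3, 12, 8, 6, 1, by decide, by decide⟩ |
        exact ⟨0, 5, 11, 8, 6, 4, by decide, by decide⟩ |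
        exact ⟨1, 2, 5, 11, 10, 12, by decide, by decide⟩ |
        exact ⟨1, 3, 8, 9, 7, 11, by decide, by decide⟩ |
        exact ⟨2, 3, 6, 9, 4, 11, by decide, by decide⟩ |
        exact ⟨3, 4, 10, 7, 5, 12, by decide, by decide⟩

lemma count1 : paschCount H₁ = 13 := by
  have h : paschCount H₁ = Nat.card S₁ :=
    Nat.card_congr (Equiv.subtypeEquivRight iff1)
  rw [h, Nat.card_eq_finsetCard]
  decide

lemma count2 : paschCount H₂ = 8 := by
  have h : paschCount H₂ = Nat.card S₂ :=
    Nat.card_congr (Equiv.subtypeEquivRight iff2)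
  rw [h, Nat.card_eq_finsetCard]
  decide

/-- **Pasch counts separate the Steiner pair**: `H₁` contains exactly 13 Pasch
configurations, `H₂` contains exactly 8, and consequently no bijection of `ℤ₁₃`
carries the triples of `H₁` onto the triples of `H₂`. -/
theorem pasch_counts_and_non_isomorphic :
    paschCount H₁ = 13 ∧ paschCount H₂ = 8 ∧
    ¬ ∃ σ : Equiv.Perm (Fin 13), H₁.image (fun t => t.image σ) = H₂ := by
  refine ⟨count1, count2, ?_⟩
  rintro ⟨σ, hσ⟩
  have hinj : Function.Injective (fun t : Finset (Fin 13) => t.image σ) :=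
    Finset.image_injective σ.injective
  have key : paschCount H₁ ≤ paschCount H₂ := by
    apply Nat.card_le_card_of_injective
      (f := fun Q : {Q : Finset (Finset (Fin 13)) // Q ⊆ H₁ ∧ IsPasch Q} =>
        (⟨Q.1.image (fun t => t.image σ), by
          constructor
          · rw [← hσ]
            exact Finset.image_subset_image Q.2.1
          · obtain ⟨a, b, c, d, e, f, hnd, hQ⟩ := Q.2.2
            refine ⟨σ a, σ b, σ c, σ d, σ e, σ f, ?_, ?_⟩
            · simpa using hnd.map σ.injective
            · rw [hQ]
              simp [Finset.image_insert, Finset.image_singleton]⟩ :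
          {Q : Finset (Finset (Fin 13)) // Q ⊆ H₂ ∧ IsPasch Q}))
    intro x y h
    apply Subtype.ext
    exact Finset.image_injective hinj (congrArg Subtype.val h)
  rw [count1, count2] at key
  omega
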